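/- Let Ψ be a p×p real positive definite diagonal matrix, let S be a p×p real symmetric positive semidefinite matrix, and set G = Ψ^{-1/2} S Ψ^{-1/2}. Suppose G = V·diag(θ)·Vᵀ with V orthogonal and θ : Fin p → ℝ monotonically decreasing, θ_j ≥ 0 for all j. Fix q < p, let V₁ be the p×q matrix of the first q columns of V, and let Δ be the q×q diagonal matrix with j-th diagonal entry √(max(θ_j − 1, 0)). Define Λ̂ = Ψ^{1/2} V₁ Δ. Then for every p×q real matrix Λ, log det(ΛΛᵀ + Ψ) + tr((ΛΛᵀ + Ψ)⁻¹ S) ≥ log det(Λ̂Λ̂ᵀ + Ψ) + tr((Λ̂Λ̂ᵀ + Ψ)⁻¹ S). -/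

import Mathlib

open Matrix Finset


noncomputable def rho (x : ℝ) : ℝ := if 1 ≤ x then x - 1 - Real.log x else 0

lemma rho_nonneg (x : ℝ) : 0 ≤ rho x := by
  unfold rho; split
  · have := Real.log_le_sub_one_of_pos (lt_of_lt_of_le one_pos ‹_›); linarith
  · exact le_refl 0

lemma le_rho {x a : ℝ} (hx : 0 ≤ x) (ha : 1 ≤ a) :
    x * (1 - a⁻¹) - Real.log a ≤ rho x := by
  have ha0 : (0:ℝ) < a := lt_of_lt_of_le one_pos ha
  unfold rho; split
  · rename_i hx1
    have hx0 : (0:ℝ) < x := lt_of_lt_of_le one_pos hx1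
    have h1 : 1 - (a/x)⁻¹ ≤ Real.log (a/x) := Real.one_sub_inv_le_log_of_pos (by positivity)
    rw [Real.log_div (ne_of_gt ha0) (ne_of_gt hx0)] at h1
    have h2 : (a/x)⁻¹ = x/a := by field_simp
    rw [h2] at h1
    have : x * a⁻¹ = x / a := by ring
    nlinarith [h1]
  · rename_i hx1
    push_neg at hx1
    have h1 : 1 - a⁻¹ ≤ Real.log a := Real.one_sub_inv_le_log_of_pos ha0
    have h2 : 0 ≤ 1 - a⁻¹ := by
      have : a⁻¹ ≤ 1 := by rw [inv_le_one_iff₀]; right; exact ha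
      linarith
    nlinarith [h1, h2]

lemma rho_eq {x : ℝ} (hx : 0 ≤ x) :
    rho x = x * (1 - (max x 1)⁻¹) - Real.log (max x 1) := by
  unfold rho; split
  · rename_i hx1
    rw [max_eq_left hx1]
    have hx0 : x ≠ 0 := by positivity
    field_simp
  · rename_i hx1
    push_neg at hx1
    rw [max_eq_right hx1.le]
    simp

lemma term_lb {x a : ℝ} (hx : 0 ≤ x) (ha : 1 ≤ a) :
    x - rho x ≤ Real.log a + x / a := by
  have := le_rho hx ha
  have hxa : x / a = x * a⁻¹ := by ring
  linarith [this, hxa ▸ le_refl (x/a)]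

lemma cand_term {x : ℝ} (hx : 0 ≤ x) :
    Real.log (max x 1) + x / (max x 1) = x - rho x := by
  have h := rho_eq hx
  have hm : (1:ℝ) ≤ max x 1 := le_max_right x 1
  have hm0 : max x 1 ≠ 0 := by positivity
  rw [h]; field_simp; ring

lemma abel_bound (e δ : ℕ → ℝ) (he0 : ∀ l, 0 ≤ e l) (hea : ∀ l, e (l+1) ≤ e l) :
    ∀ k, (∀ m, m ≤ k → (∑ l ∈ Finset.range m, δ l) ≤ 0) →
      ∑ l ∈ Finset.range k, e l * δ l ≤ e k * ∑ l ∈ Finset.range k, δ l := by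
  intro k
  induction k with
  | zero => simp
  | succ k ih =>
    intro hD
    have h1 := ih (fun m hm => hD m (hm.trans (Nat.le_succ k)))
    rw [Finset.sum_range_succ, Finset.sum_range_succ]
    have hDk1 : (∑ l ∈ Finset.range (k+1), δ l) ≤ 0 := hD (k+1) le_rfl
    rw [Finset.sum_range_succ] at hDk1
    have : e k * (∑ l ∈ Finset.range k, δ l) + e k * δ k = e k * ((∑ l ∈ Finset.range k, δ l) + δ k) := by ring
    calc (∑ l ∈ Finset.range k, e l * δ l) + e k * δ k
        ≤ e k * (∑ l ∈ Finset.range k, δ l) + e k * δ k := by linarith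
      _ = e k * ((∑ l ∈ Finset.range k, δ l) + δ k) := by ring
      _ ≤ e (k+1) * ((∑ l ∈ Finset.range k, δ l) + δ k) := by
          apply mul_le_mul_of_nonpos_right (hea k) hDk1

lemma maj0 (θw w : ℕ → ℝ) (k q' : ℕ) (hk : k ≤ q')
    (hw0 : ∀ l, 0 ≤ w l) (hwa : ∀ l, w (l+1) ≤ w l) (hθ0 : ∀ l, 0 ≤ θw l)
    (hpre : ∀ m, m ≤ k → ∑ l ∈ range m, w l ≤ ∑ l ∈ range m, θw l) :
    ∑ l ∈ range k, rho (w l) ≤ ∑ l ∈ range q', rho (θw l) := by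
  have step1 : ∑ l ∈ range k, rho (θw l) ≤ ∑ l ∈ range q', rho (θw l) :=
    Finset.sum_le_sum_of_subset_of_nonneg (Finset.range_subset_range.2 hk)
      (fun i _ _ => rho_nonneg _)
  have he0 : ∀ l, 0 ≤ 1 - (max (w l) 1)⁻¹ := fun l => by
    have : (max (w l) 1)⁻¹ ≤ 1 := by
      rw [inv_le_one_iff₀]; right; exact le_max_right _ _
    linarith
  have hea : ∀ l, 1 - (max (w (l+1)) 1)⁻¹ ≤ 1 - (max (w l) 1)⁻¹ := fun l => by
    have h1 : (0:ℝ) < max (w (l+1)) 1 := lt_of_lt_of_le one_pos (le_max_right _ _)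
    have h2 : max (w (l+1)) 1 ≤ max (w l) 1 := max_le_max (hwa l) le_rfl
    have h3 : (max (w l) 1)⁻¹ ≤ (max (w (l+1)) 1)⁻¹ := by
      apply inv_anti₀ h1 h2
    linarith
  have hD : ∀ m, m ≤ k → ∑ l ∈ range m, (w l - θw l) ≤ 0 := fun m hm => by
    have := hpre m hm
    rw [Finset.sum_sub_distrib]; linarith
  have habel := abel_bound (fun l => 1 - (max (w l) 1)⁻¹) (fun l => w l - θw l)
    he0 hea k hD
  have hterm : ∀ l, rho (w l) ≤ rho (θw l) + (1 - (max (w l) 1)⁻¹) * (w l - θw l) := fun l => by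
    have h1 := rho_eq (hw0 l)
    have h2 : θw l * (1 - (max (w l) 1)⁻¹) - Real.log (max (w l) 1) ≤ rho (θw l) :=
      le_rho (hθ0 l) (le_max_right _ _)
    nlinarith [h1, h2]
  have hek : 0 ≤ 1 - (max (w k) 1)⁻¹ := he0 k
  have hDk : ∑ l ∈ range k, (w l - θw l) ≤ 0 := hD k le_rfl
  have hlast : (1 - (max (w k) 1)⁻¹) * ∑ l ∈ range k, (w l - θw l) ≤ 0 :=
    mul_nonpos_of_nonneg_of_nonpos hek hDk
  calc ∑ l ∈ range k, rho (w l)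
      ≤ ∑ l ∈ range k, (rho (θw l) + (1 - (max (w l) 1)⁻¹) * (w l - θw l)) :=
        Finset.sum_le_sum (fun l _ => hterm l)
    _ = (∑ l ∈ range k, rho (θw l)) + ∑ l ∈ range k, (1 - (max (w l) 1)⁻¹) * (w l - θw l) :=
        Finset.sum_add_distrib
    _ ≤ (∑ l ∈ range k, rho (θw l)) + (1 - (max (w k) 1)⁻¹) * ∑ l ∈ range k, (w l - θw l) := by
        linarith [habel]
    _ ≤ ∑ l ∈ range k, rho (θw l) := by linarith
    _ ≤ _ := step1


lemma filter_sum_eq {p : ℕ} (f : Fin p → ℝ) (m : ℕ) (hm : m ≤ p) :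
    ∑ j ∈ univ.filter (fun j : Fin p => (j:ℕ) < m), f j
      = ∑ l ∈ range m, if h : l < p then f ⟨l, h⟩ else 0 := by
  exact Finset.sum_bij'
    (fun (j : Fin p) _ => (j : ℕ))
    (fun (l : ℕ) (hl : l ∈ range m) => (⟨l, lt_of_lt_of_le (mem_range.1 hl) hm⟩ : Fin p))
    (fun a ha => mem_range.2 (by simpa using ha))
    (fun l hl => mem_filter.2 ⟨mem_univ _, mem_range.1 hl⟩)
    (fun a ha => rfl)
    (fun l hl => rfl)
    (fun a ha => by rw [dif_pos a.isLt])

lemma card_filter_lt {p : ℕ} (m : ℕ) (hm : m ≤ p) :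
    ((univ.filter (fun j : Fin p => (j:ℕ) < m)).card : ℝ) = (m : ℝ) := by
  have h := filter_sum_eq (fun _ : Fin p => (1:ℝ)) m hm
  rw [Finset.sum_const, nsmul_eq_mul, mul_one] at h
  rw [h]
  rw [Finset.sum_congr rfl (fun l hl => dif_pos (lt_of_lt_of_le (mem_range.1 hl) hm))]
  simp

lemma sumbound {p : ℕ} (θ : Fin p → ℝ) (hθa : Antitone θ) (hθ0 : ∀ j, 0 ≤ θ j)
    (β : Fin p → ℝ) (hβ0 : ∀ j, 0 ≤ β j) (hβ1 : ∀ j, β j ≤ 1) (m : ℕ) (hm : m ≤ p)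
    (hβs : ∑ j, β j ≤ (m:ℝ)) :
    ∑ j, θ j * β j ≤ ∑ j ∈ univ.filter (fun j : Fin p => (j:ℕ) < m), θ j := by
  rcases Nat.eq_zero_or_pos m with hm0 | hm1
  · subst hm0
    have hz : ∀ j ∈ (univ : Finset (Fin p)), β j = 0 := by
      rw [← Finset.sum_eq_zero_iff_of_nonneg (fun j _ => hβ0 j)]
      refine le_antisymm (by simpa using hβs) (Finset.sum_nonneg (fun j _ => hβ0 j))
    have h1 : ∑ j, θ j * β j = 0 :=
      Finset.sum_eq_zero (fun j hj => by rw [hz j hj, mul_zero])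
    have h2 : univ.filter (fun j : Fin p => (j:ℕ) < 0) = ∅ := by
      apply Finset.filter_false_of_mem; intro j _; omega
    rw [h1, h2]; simp
  · have hm1p : m - 1 < p := by omega
    set t := θ ⟨m - 1, hm1p⟩ with ht
    have ht0 : 0 ≤ t := hθ0 _
    have hsplit := Finset.sum_filter_add_sum_filter_not (univ : Finset (Fin p))
      (fun j : Fin p => (j:ℕ) < m) (fun j => θ j * β j)
    have hlt : ∀ j ∈ univ.filter (fun j : Fin p => (j:ℕ) < m),
        θ j * β j ≤ θ j + t * (β j - 1) := by
      intro j hj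
      simp only [mem_filter] at hj
      have hjt : t ≤ θ j := hθa (by simp [Fin.le_def]; omega)
      nlinarith [hβ1 j, hjt]
    have hge : ∀ j ∈ univ.filter (fun j : Fin p => ¬ (j:ℕ) < m),
        θ j * β j ≤ t * β j := by
      intro j hj
      simp only [mem_filter] at hj
      have hjt : θ j ≤ t := hθa (by simp [Fin.le_def]; omega)
      nlinarith [hβ0 j, hjt]
    have h1 : ∑ j ∈ univ.filter (fun j : Fin p => (j:ℕ) < m), θ j * β j
        ≤ (∑ j ∈ univ.filter (fun j : Fin p => (j:ℕ) < m), θ j)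
          + t * ((∑ j ∈ univ.filter (fun j : Fin p => (j:ℕ) < m), β j) - m) := by
      have := Finset.sum_le_sum hlt
      rw [Finset.sum_add_distrib] at this
      have hcard := card_filter_lt (p := p) m hm
      have : ∑ j ∈ univ.filter (fun j : Fin p => (j:ℕ) < m), t * (β j - 1)
          = t * ((∑ j ∈ univ.filter (fun j : Fin p => (j:ℕ) < m), β j) - m) := by
        rw [← Finset.mul_sum, Finset.sum_sub_distrib, Finset.sum_const, nsmul_eq_mul, mul_one,
          hcard]
      linarith [Finset.sum_le_sum hlt, Finset.sum_add_distrib (s := univ.filter (fun j : Fin p => (j:ℕ) < m)) (f := θ) (g := fun j => t * (β j - 1)), this]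
    have h2 : ∑ j ∈ univ.filter (fun j : Fin p => ¬ (j:ℕ) < m), θ j * β j
        ≤ t * ∑ j ∈ univ.filter (fun j : Fin p => ¬ (j:ℕ) < m), β j := by
      rw [Finset.mul_sum]; exact Finset.sum_le_sum hge
    have hβsplit := Finset.sum_filter_add_sum_filter_not (univ : Finset (Fin p))
      (fun j : Fin p => (j:ℕ) < m) β
    nlinarith [hsplit, h1, h2, hβsplit, hβs, ht0]

lemma rho_zero : rho 0 = 0 := by unfold rho; norm_num

lemma card_filter_lt' {p : ℕ} (m : ℕ) (hm : m ≤ p) :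
    (univ.filter (fun j : Fin p => (j:ℕ) < m)).card = m := by
  have he : univ.filter (fun j : Fin p => (j:ℕ) < m)
      = (Finset.range m).attachFin (fun x hx => lt_of_lt_of_le (mem_range.1 hx) hm) := by
    ext j
    simp [Finset.mem_attachFin]
  rw [he, Finset.card_attachFin, Finset.card_range]

lemma kyfan {p : ℕ} (θ : Fin p → ℝ) (hθa : Antitone θ) (hθ0 : ∀ j, 0 ≤ θ j)
    (C : Matrix (Fin p) (Fin p) ℝ) (hC1 : Cᵀ * C = 1) (hC2 : C * Cᵀ = 1)
    (K : Finset (Fin p)) :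
    ∑ i ∈ K, (∑ j, θ j * (C j i)^2)
      ≤ ∑ j ∈ univ.filter (fun j : Fin p => (j:ℕ) < K.card), θ j := by
  have hrow : ∀ j : Fin p, ∑ i, (C j i)^2 = 1 := by
    intro j
    have h := congrFun (congrFun hC2 j) j
    rw [Matrix.mul_apply] at h
    simp only [Matrix.transpose_apply] at h
    rw [Matrix.one_apply_eq] at h
    rw [← h]
    apply Finset.sum_congr rfl
    intro i _
    ring
  have hcol : ∀ i : Fin p, ∑ j, (C j i)^2 = 1 := by
    intro i
    have h := congrFun (congrFun hC1 i) i
    rw [Matrix.mul_apply] at h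
    simp only [Matrix.transpose_apply] at h
    rw [Matrix.one_apply_eq] at h
    rw [← h]
    apply Finset.sum_congr rfl
    intro j _
    ring
  have hswap : ∑ i ∈ K, (∑ j, θ j * (C j i)^2)
      = ∑ j, θ j * (∑ i ∈ K, (C j i)^2) := by
    rw [Finset.sum_comm]
    apply Finset.sum_congr rfl
    intro j _
    rw [Finset.mul_sum]
  rw [hswap]
  apply sumbound θ hθa hθ0 (fun j => ∑ i ∈ K, (C j i)^2)
    (fun j => Finset.sum_nonneg (fun i _ => sq_nonneg _))
    (fun j => by
      rw [← hrow j]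
      exact Finset.sum_le_sum_of_subset_of_nonneg (Finset.subset_univ K)
        (fun i _ _ => sq_nonneg _))
    K.card (by simpa using Finset.card_le_univ K)
  rw [Finset.sum_comm]
  have : ∀ i ∈ K, ∑ j, (C j i)^2 = 1 := fun i _ => hcol i
  rw [Finset.sum_congr rfl this, Finset.sum_const, nsmul_eq_mul, mul_one]

lemma kyfan_total {p : ℕ} (θ : Fin p → ℝ)
    (C : Matrix (Fin p) (Fin p) ℝ) (hC2 : C * Cᵀ = 1) :
    ∑ i, (∑ j, θ j * (C j i)^2) = ∑ j, θ j := by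
  have hrow : ∀ j : Fin p, ∑ i, (C j i)^2 = 1 := by
    intro j
    have h := congrFun (congrFun hC2 j) j
    rw [Matrix.mul_apply] at h
    simp only [Matrix.transpose_apply] at h
    rw [Matrix.one_apply_eq] at h
    rw [← h]
    exact Finset.sum_congr rfl (fun i _ => by ring)
  rw [Finset.sum_comm]
  apply Finset.sum_congr rfl
  intro j _
  rw [← Finset.mul_sum, hrow j, mul_one]

lemma maj {p q : ℕ} (hq : q < p) (θ : Fin p → ℝ) (hθ0 : ∀ j, 0 ≤ θ j)
    (s : Fin p → ℝ) (hs0 : ∀ i, 0 ≤ s i)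
    (hKF : ∀ K : Finset (Fin p),
      ∑ i ∈ K, s i ≤ ∑ j ∈ univ.filter (fun j : Fin p => (j:ℕ) < K.card), θ j)
    (J : Finset (Fin p)) (hJ : J.card ≤ q) :
    ∑ i ∈ J, rho (s i) ≤ ∑ j ∈ univ.filter (fun j : Fin p => (j:ℕ) < q), rho (θ j) := by
  set k := J.card with hk
  have hkq : k ≤ q := hJ
  have hkp : k ≤ p := le_trans hkq hq.le
  -- sorted enumeration of J, decreasing in s
  set oi := J.orderIsoOfFin hk.symm with hoi
  set f : Fin k → ℝ := fun l => s (oi l : Fin p) with hf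
  set σ := Tuple.sort f with hσ
  have hmono : Monotone (f ∘ σ) := Tuple.monotone_sort f
  set emb : Fin k → Fin p := fun l => (oi (σ l.rev) : Fin p) with hemb
  have hembJ : ∀ l, emb l ∈ J := fun l => (oi (σ l.rev)).2
  have hembinj : Function.Injective emb := by
    intro a b hab
    have h1 : oi (σ a.rev) = oi (σ b.rev) := Subtype.ext hab
    have h2 : σ a.rev = σ b.rev := oi.injective h1
    have h3 : a.rev = b.rev := σ.injective h2
    exact Fin.rev_injective h3
  have hanti : ∀ a b : Fin k, a ≤ b → s (emb b) ≤ s (emb a) := by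
    intro a b hab
    have : b.rev ≤ a.rev := by
      rw [Fin.rev_le_rev]
      exact hab
    exact hmono this
  set W : ℕ → ℝ := fun l => if h : l < k then s (emb ⟨l, h⟩) else 0 with hW
  set θw : ℕ → ℝ := fun l => if h : l < p then θ ⟨l, h⟩ else 0 with hθw
  have hW0 : ∀ l, 0 ≤ W l := by
    intro l; rw [hW]; dsimp only; split
    · exact hs0 _
    · exact le_refl 0
  have hWa : ∀ l, W (l+1) ≤ W l := by
    intro l; rw [hW]; dsimp only
    by_cases h1 : l + 1 < k
    · rw [dif_pos h1, dif_pos (by omega : l < k)]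
      exact hanti ⟨l, by omega⟩ ⟨l+1, h1⟩ (by simp [Fin.le_def])
    · rw [dif_neg h1]
      split
      · exact hs0 _
      · exact le_refl 0
  have hθw0 : ∀ l, 0 ≤ θw l := by
    intro l; rw [hθw]; dsimp only; split
    · exact hθ0 _
    · exact le_refl 0
  -- prefix sums
  have hpre : ∀ m, m ≤ k → ∑ l ∈ range m, W l ≤ ∑ l ∈ range m, θw l := by
    intro m hm
    have hmp : m ≤ p := le_trans hm hkp
    -- LHS as sum over image
    set Km : Finset (Fin p) := (univ.filter (fun l : Fin k => (l:ℕ) < m)).image emb with hKm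
    have hKmcard : Km.card = m := by
      rw [hKm, Finset.card_image_of_injective _ hembinj, card_filter_lt' m hm]
    have hL : ∑ l ∈ range m, W l = ∑ i ∈ Km, s i := by
      have h1 : ∑ l ∈ range m, W l
          = ∑ l ∈ range m, if h : l < k then (fun l' : Fin k => s (emb l')) ⟨l, h⟩ else 0 := rfl
      rw [h1, ← filter_sum_eq (fun l' : Fin k => s (emb l')) m hm, hKm,
        Finset.sum_image (fun a _ b _ hab => hembinj hab)]
    have hR : ∑ l ∈ range m, θw l
        = ∑ j ∈ univ.filter (fun j : Fin p => (j:ℕ) < m), θ j := by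
      rw [filter_sum_eq θ m hmp]
    rw [hL, hR]
    have := hKF Km
    rwa [hKmcard] at this
  have hmain := maj0 θw W k q hkq hW0 hWa hθw0 hpre
  -- convert LHS
  have hJimage : J = Finset.image emb univ := by
    apply Finset.eq_of_subset_of_card_le
    · intro x hx
      rcases oi.surjective ⟨x, hx⟩ with ⟨l, hl⟩
      rcases σ.surjective l with ⟨l', hl'⟩
      refine Finset.mem_image.2 ⟨l'.rev, Finset.mem_univ _, ?_⟩
      rw [hemb]
      dsimp only
      rw [Fin.rev_rev, hl', hl]
    · rw [Finset.card_image_of_injective _ hembinj, Finset.card_univ, Fintype.card_fin]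
  have hLHS : ∑ i ∈ J, rho (s i) = ∑ l ∈ range k, rho (W l) := by
    rw [hJimage, Finset.sum_image (fun a _ b _ hab => hembinj hab)]
    have h1 : ∑ l ∈ range k, rho (W l)
        = ∑ l ∈ range k, if h : l < k then (fun l' : Fin k => rho (s (emb l'))) ⟨l, h⟩ else 0 := by
      apply Finset.sum_congr rfl
      intro l hl
      have hlk : l < k := mem_range.1 hl
      show rho (if h : l < k then s (emb ⟨l, h⟩) else 0) = _
      rw [dif_pos hlk, dif_pos hlk]
    rw [h1, ← filter_sum_eq (fun l' : Fin k => rho (s (emb l'))) k le_rfl]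
    have : univ.filter (fun l : Fin k => (l:ℕ) < k) = univ := by
      apply Finset.filter_true_of_mem
      intro l _
      exact l.isLt
    rw [this]
  -- convert RHS
  have hRHS : ∑ l ∈ range q, rho (θw l)
      = ∑ j ∈ univ.filter (fun j : Fin p => (j:ℕ) < q), rho (θ j) := by
    rw [filter_sum_eq (fun j => rho (θ j)) q hq.le]
    apply Finset.sum_congr rfl
    intro l hl
    have hlp : l < p := lt_of_lt_of_le (mem_range.1 hl) hq.le
    show rho (if h : l < p then θ ⟨l, h⟩ else 0) = (if h : l < p then rho (θ ⟨l, h⟩) else 0)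
    rw [dif_pos hlp, dif_pos hlp]
  rw [hLHS, ← hRHS]
  exact hmain


section mx
variable {p : ℕ}

lemma conj_one (U : Matrix (Fin p) (Fin p) ℝ) (hU2 : U * Uᵀ = 1) (b : Fin p → ℝ) :
    U * Matrix.diagonal b * Uᵀ + 1 = U * Matrix.diagonal (fun i => b i + 1) * Uᵀ := by
  have h : Matrix.diagonal (fun i => b i + 1) = Matrix.diagonal b + 1 := by
    rw [← Matrix.diagonal_one, ← Matrix.diagonal_add]
  rw [h, Matrix.mul_add, Matrix.add_mul, Matrix.mul_one, hU2]

lemma det_conj (U : Matrix (Fin p) (Fin p) ℝ) (hU2 : U * Uᵀ = 1) (d : Fin p → ℝ) :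
    (U * Matrix.diagonal d * Uᵀ).det = ∏ i, d i := by
  rw [Matrix.det_mul, Matrix.det_mul, Matrix.det_transpose, Matrix.det_diagonal]
  have h1 : U.det * U.det = 1 := by
    have h := Matrix.det_mul U Uᵀ
    rw [hU2, Matrix.det_one, Matrix.det_transpose] at h
    linarith
  calc U.det * (∏ i, d i) * U.det = (U.det * U.det) * ∏ i, d i := by ring
    _ = ∏ i, d i := by rw [h1, one_mul]

lemma inv_conj (U : Matrix (Fin p) (Fin p) ℝ) (hU1 : Uᵀ * U = 1) (hU2 : U * Uᵀ = 1)
    (d : Fin p → ℝ) (hd : ∀ i, d i ≠ 0) :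
    (U * Matrix.diagonal d * Uᵀ)⁻¹ = U * Matrix.diagonal (fun i => (d i)⁻¹) * Uᵀ := by
  apply Matrix.inv_eq_right_inv
  have hdd : Matrix.diagonal d * Matrix.diagonal (fun i => (d i)⁻¹) = (1 : Matrix (Fin p) (Fin p) ℝ) := by
    rw [Matrix.diagonal_mul_diagonal]
    have : (fun i => d i * (d i)⁻¹) = fun _ => (1:ℝ) := funext fun i => mul_inv_cancel₀ (hd i)
    rw [this, Matrix.diagonal_one]
  calc U * Matrix.diagonal d * Uᵀ * (U * Matrix.diagonal (fun i => (d i)⁻¹) * Uᵀ)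
      = U * (Matrix.diagonal d * ((Uᵀ * U) * (Matrix.diagonal (fun i => (d i)⁻¹) * Uᵀ))) := by
        simp only [Matrix.mul_assoc]
    _ = U * ((Matrix.diagonal d * Matrix.diagonal (fun i => (d i)⁻¹)) * Uᵀ) := by
        rw [hU1, one_mul, Matrix.mul_assoc]
    _ = 1 := by rw [hdd, one_mul, hU2]

lemma trace_diag_mul (d : Fin p → ℝ) (Y : Matrix (Fin p) (Fin p) ℝ) :
    (Matrix.diagonal d * Y).trace = ∑ i, d i * Y i i := by
  unfold Matrix.trace
  apply Finset.sum_congr rfl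
  intro i _
  rw [Matrix.diag_apply, Matrix.diagonal_mul]

lemma entry_diag (C : Matrix (Fin p) (Fin p) ℝ) (θ : Fin p → ℝ) (i : Fin p) :
    (Cᵀ * (Matrix.diagonal θ * C)) i i = ∑ j, θ j * (C j i)^2 := by
  rw [Matrix.mul_apply]
  apply Finset.sum_congr rfl
  intro j _
  rw [Matrix.transpose_apply, Matrix.diagonal_mul]
  ring

lemma specE (U : Matrix (Fin p) (Fin p) ℝ) (hU1 : Uᵀ * U = 1) (hU2 : U * Uᵀ = 1)
    (b : Fin p → ℝ) (hb : ∀ i, 0 ≤ b i) (G : Matrix (Fin p) (Fin p) ℝ) :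
    Real.log (U * Matrix.diagonal b * Uᵀ + 1).det
        + ((U * Matrix.diagonal b * Uᵀ + 1)⁻¹ * G).trace
      = ∑ i, (Real.log (b i + 1) + (b i + 1)⁻¹ * ((Uᵀ * (G * U)) i i)) := by
  have hd : ∀ i, b i + 1 ≠ 0 := fun i => by have := hb i; positivity
  rw [conj_one U hU2 b, det_conj U hU2, inv_conj U hU1 hU2 _ hd]
  rw [Real.log_prod (fun i _ => hd i)]
  rw [Finset.sum_add_distrib]
  congr 1
  have h1 : U * Matrix.diagonal (fun i => (b i + 1)⁻¹) * Uᵀ * G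
      = U * (Matrix.diagonal (fun i => (b i + 1)⁻¹) * (Uᵀ * G)) := by
    simp only [Matrix.mul_assoc]
  rw [h1, Matrix.trace_mul_comm]
  have h2 : Matrix.diagonal (fun i => (b i + 1)⁻¹) * (Uᵀ * G) * U
      = Matrix.diagonal (fun i => (b i + 1)⁻¹) * (Uᵀ * (G * U)) := by
    simp only [Matrix.mul_assoc]
  rw [h2, trace_diag_mul]

end mx


lemma exists_spec {p q : ℕ} (M : Matrix (Fin p) (Fin q) ℝ) :
    ∃ (U : Matrix (Fin p) (Fin p) ℝ) (b : Fin p → ℝ),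
      Uᵀ * U = 1 ∧ U * Uᵀ = 1 ∧ (∀ i, 0 ≤ b i) ∧
      (univ.filter (fun i => b i ≠ 0)).card ≤ q ∧
      M * Mᵀ = U * Matrix.diagonal b * Uᵀ := by
  have hct : Mᴴ = Mᵀ := Matrix.conjTranspose_eq_transpose_of_trivial M
  have hBpsd : (M * Mᵀ).PosSemidef := by
    rw [← hct]; exact Matrix.posSemidef_self_mul_conjTranspose M
  have hB : (M * Mᵀ).IsHermitian := hBpsd.1
  set U : Matrix (Fin p) (Fin p) ℝ := (hB.eigenvectorUnitary : Matrix (Fin p) (Fin p) ℝ) with hUdef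
  have hstar : star U = Uᵀ := by
    rw [Matrix.star_eq_conjTranspose, Matrix.conjTranspose_eq_transpose_of_trivial]
  have hU1 : Uᵀ * U = 1 := by
    rw [← hstar]
    exact (Matrix.mem_unitaryGroup_iff'.mp hB.eigenvectorUnitary.2)
  have hU2 : U * Uᵀ = 1 := by
    rw [← hstar]
    exact (Matrix.mem_unitaryGroup_iff.mp hB.eigenvectorUnitary.2)
  refine ⟨U, hB.eigenvalues, hU1, hU2, fun i => hBpsd.eigenvalues_nonneg i, ?_, ?_⟩
  · have hr := hB.rank_eq_card_non_zero_eigs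
    have hc : Fintype.card {i // hB.eigenvalues i ≠ 0}
        = (univ.filter (fun i => hB.eigenvalues i ≠ 0)).card :=
      Fintype.card_subtype _
    have h1 : (M * Mᵀ).rank ≤ M.rank := Matrix.rank_mul_le_left M Mᵀ
    have h2 : M.rank ≤ q := by
      have := Matrix.rank_le_card_width M
      simpa using this
    omega
  · have hth := hB.spectral_theorem
    rw [Unitary.conjStarAlgAut_apply, hstar] at hth
    convert hth using 2
    all_goals rfl

lemma mem_map_castLE {p q : ℕ} (hq : q ≤ p) (j : Fin p) :
    j ∈ (univ : Finset (Fin q)).map (Fin.castLEEmb hq) ↔ (j:ℕ) < q := by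
  simp only [Finset.mem_map, Finset.mem_univ, true_and]
  constructor
  · rintro ⟨a, ha⟩
    rw [← ha]
    exact a.isLt
  · intro h
    exact ⟨⟨(j:ℕ), h⟩, by ext; simp [Fin.castLEEmb]⟩

lemma cand_B {p q : ℕ} (hq : q < p) (V : Matrix (Fin p) (Fin p) ℝ)
    (θ : Fin p → ℝ)
    (V₁ : Matrix (Fin p) (Fin q) ℝ)
    (hV₁ : V₁ = Matrix.of fun i j => V i (Fin.castLE hq.le j))
    (Δ : Matrix (Fin q) (Fin q) ℝ)
    (hΔ : Δ = Matrix.diagonal fun j => Real.sqrt (max (θ (Fin.castLE hq.le j) - 1) 0)) :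
    (V₁ * Δ) * (V₁ * Δ)ᵀ
      = V * Matrix.diagonal (fun j : Fin p => if (j:ℕ) < q then max (θ j - 1) 0 else 0) * Vᵀ := by
  have hΔΔ : Δ * Δᵀ = Matrix.diagonal (fun j => max (θ (Fin.castLE hq.le j) - 1) 0) := by
    rw [hΔ, Matrix.diagonal_transpose, Matrix.diagonal_mul_diagonal]
    have hfun : (fun j : Fin q => Real.sqrt (max (θ (Fin.castLE hq.le j) - 1) 0)
          * Real.sqrt (max (θ (Fin.castLE hq.le j) - 1) 0))
        = fun j : Fin q => max (θ (Fin.castLE hq.le j) - 1) 0 :=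
      funext fun j => Real.mul_self_sqrt (le_max_right _ _)
    rw [hfun]
  have h1 : (V₁ * Δ) * (V₁ * Δ)ᵀ = V₁ * (Δ * Δᵀ) * V₁ᵀ := by
    rw [Matrix.transpose_mul]
    simp only [Matrix.mul_assoc]
  rw [h1, hΔΔ]
  ext i k
  rw [Matrix.mul_apply, Matrix.mul_apply]
  have hR : ∀ j : Fin p,
      (V * Matrix.diagonal (fun j : Fin p => if (j:ℕ) < q then max (θ j - 1) 0 else 0)) i j * Vᵀ j k
        = V i j * (if (j:ℕ) < q then max (θ j - 1) 0 else 0) * V k j := by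
    intro j
    rw [Matrix.mul_diagonal, Matrix.transpose_apply]
  have hz : ∀ j ∈ (univ : Finset (Fin p)),
      j ∉ (univ : Finset (Fin q)).map (Fin.castLEEmb hq.le) →
      V i j * (if (j:ℕ) < q then max (θ j - 1) 0 else 0) * V k j = 0 := by
    intro j _ hj
    have hnot : ¬ ((j:ℕ) < q) := fun h => hj ((mem_map_castLE hq.le j).2 h)
    rw [if_neg hnot]
    ring
  have hsub := Finset.sum_subset
    (Finset.subset_univ ((univ : Finset (Fin q)).map (Fin.castLEEmb hq.le))) hz
  rw [Finset.sum_congr rfl (fun j _ => hR j), ← hsub, Finset.sum_map]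
  apply Finset.sum_congr rfl
  intro j _
  have hjq : ((Fin.castLEEmb hq.le j : Fin p) : ℕ) < q := j.isLt
  rw [if_pos hjq, Matrix.mul_diagonal, Matrix.transpose_apply, hV₁]
  simp [Fin.castLEEmb]


lemma reduce {p q : ℕ} (Ψ Ψh S G : Matrix (Fin p) (Fin p) ℝ)
    (hΨh : Ψh.PosDef) (hΨhsq : Ψh * Ψh = Ψ) (hΨhsym : Ψhᵀ = Ψh)
    (hG : G = Ψh⁻¹ * S * Ψh⁻¹) (Λ : Matrix (Fin p) (Fin q) ℝ)
    (hdetB : 0 < ((Ψh⁻¹ * Λ) * (Ψh⁻¹ * Λ)ᵀ + 1).det) :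
    Real.log (Λ * Λᵀ + Ψ).det + ((Λ * Λᵀ + Ψ)⁻¹ * S).trace
      = Real.log Ψ.det
        + (Real.log ((Ψh⁻¹ * Λ) * (Ψh⁻¹ * Λ)ᵀ + 1).det
          + (((Ψh⁻¹ * Λ) * (Ψh⁻¹ * Λ)ᵀ + 1)⁻¹ * G).trace) := by
  set M := Ψh⁻¹ * Λ with hM
  set B := M * Mᵀ + 1 with hB
  have hdet : IsUnit Ψh.det := hΨh.det_pos.ne'.isUnit
  have hMt : Mᵀ * Ψh = Λᵀ := by
    rw [hM, Matrix.transpose_mul, Matrix.transpose_nonsing_inv, hΨhsym,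
      Matrix.nonsing_inv_mul_cancel_right _ _ hdet]
  have hMl : Ψh * M = Λ := Matrix.mul_nonsing_inv_cancel_left _ _ hdet
  have hfact : Λ * Λᵀ + Ψ = Ψh * B * Ψh := by
    rw [hB, Matrix.mul_add, Matrix.add_mul, Matrix.mul_one, hΨhsq]
    congr 1
    calc Λ * Λᵀ = (Ψh * M) * (Mᵀ * Ψh) := by rw [hMl, hMt]
      _ = Ψh * (M * Mᵀ) * Ψh := by simp only [Matrix.mul_assoc]
  have hΨdet : Ψ.det = Ψh.det * Ψh.det := by rw [← hΨhsq, Matrix.det_mul]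
  have hΨdetpos : 0 < Ψ.det := by
    have := hΨh.det_pos
    rw [hΨdet]; positivity
  have hdet2 : (Λ * Λᵀ + Ψ).det = Ψ.det * B.det := by
    rw [hfact, Matrix.det_mul, Matrix.det_mul, hΨdet]; ring
  have htr : ((Λ * Λᵀ + Ψ)⁻¹ * S).trace = (B⁻¹ * G).trace := by
    rw [hfact, Matrix.mul_inv_rev, Matrix.mul_inv_rev]
    have h1 : Ψh⁻¹ * (B⁻¹ * Ψh⁻¹) * S = Ψh⁻¹ * (B⁻¹ * (Ψh⁻¹ * S)) := by
      simp only [Matrix.mul_assoc]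
    rw [h1, Matrix.trace_mul_comm]
    have h2 : B⁻¹ * (Ψh⁻¹ * S) * Ψh⁻¹ = B⁻¹ * (Ψh⁻¹ * S * Ψh⁻¹) := by
      simp only [Matrix.mul_assoc]
    rw [h2, ← hG]
  rw [hdet2, Real.log_mul hΨdetpos.ne' hdetB.ne', htr]
  ring

lemma max_sub_add (x : ℝ) : max (x - 1) 0 + 1 = max x 1 := by
  rcases le_total x 1 with h | h
  · rw [max_eq_right (by linarith), max_eq_right h]; ring
  · rw [max_eq_left (by linarith : (0:ℝ) ≤ x - 1), max_eq_left h]; ring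

/-- Result 1 (optimality): with `G = Ψ^{-1/2} S Ψ^{-1/2} = V diag(θ) Vᵀ`, `θ` decreasing
and nonnegative, `q < p`, `V₁` the first `q` columns of `V`, `Δ = diag(√(max(θ_j − 1, 0)))`,
the loading matrix `Λ̂ = Ψ^{1/2} V₁ Δ` minimizes
`Λ ↦ log det(ΛΛᵀ + Ψ) + tr((ΛΛᵀ + Ψ)⁻¹ S)`. -/
theorem profile_loading_optimal {p q : ℕ} (hq : q < p)
    (Ψ Ψh S : Matrix (Fin p) (Fin p) ℝ)
    (hΨ : Ψ.PosDef) (hΨdiag : Ψ.IsDiag)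
    (hΨh : Ψh.PosDef) (hΨhsq : Ψh * Ψh = Ψ)
    (hS : S.PosSemidef)
    (G : Matrix (Fin p) (Fin p) ℝ) (hG : G = Ψh⁻¹ * S * Ψh⁻¹)
    (V : Matrix (Fin p) (Fin p) ℝ) (hV : V ∈ Matrix.orthogonalGroup (Fin p) ℝ)
    (θ : Fin p → ℝ) (hθdec : Antitone θ) (hθnonneg : ∀ j, 0 ≤ θ j)
    (hGeig : G = V * Matrix.diagonal θ * Vᵀ)
    (V₁ : Matrix (Fin p) (Fin q) ℝ)
    (hV₁ : V₁ = Matrix.of fun i j => V i (Fin.castLE hq.le j))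
    (Δ : Matrix (Fin q) (Fin q) ℝ)
    (hΔ : Δ = Matrix.diagonal fun j => Real.sqrt (max (θ (Fin.castLE hq.le j) - 1) 0))
    (Λhat : Matrix (Fin p) (Fin q) ℝ) (hΛhat : Λhat = Ψh * V₁ * Δ) :
    ∀ Λ : Matrix (Fin p) (Fin q) ℝ,
      Real.log (Λ * Λᵀ + Ψ).det + ((Λ * Λᵀ + Ψ)⁻¹ * S).trace
        ≥ Real.log (Λhat * Λhatᵀ + Ψ).det + ((Λhat * Λhatᵀ + Ψ)⁻¹ * S).trace := by
  intro Λ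
  have hdetΨh : IsUnit Ψh.det := hΨh.det_pos.ne'.isUnit
  have hΨhsym : Ψhᵀ = Ψh := by
    rw [← Matrix.conjTranspose_eq_transpose_of_trivial]
    exact hΨh.1
  have hstarV : star V = Vᵀ := by
    rw [Matrix.star_eq_conjTranspose, Matrix.conjTranspose_eq_transpose_of_trivial]
  have hV2 : V * Vᵀ = 1 := by
    rw [← hstarV]
    have h := hV
    rw [Matrix.mem_orthogonalGroup_iff] at h
    exact h
  have hV1 : Vᵀ * V = 1 := by
    rw [← hstarV]
    have h := hV
    rw [Matrix.mem_orthogonalGroup_iff'] at h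
    exact h
  set RHS0 : ℝ :=
    (∑ j, θ j) - ∑ j ∈ univ.filter (fun j : Fin p => (j:ℕ) < q), rho (θ j) with hRHS0
  -- candidate side
  have hMhat : Ψh⁻¹ * Λhat = V₁ * Δ := by
    rw [hΛhat, Matrix.mul_assoc, Matrix.nonsing_inv_mul_cancel_left _ _ hdetΨh]
  set e : Fin p → ℝ := fun j => if (j:ℕ) < q then max (θ j - 1) 0 else 0 with he
  have he0 : ∀ j, 0 ≤ e j := fun j => by
    simp only [he]; split
    · exact le_max_right _ _
    · exact le_refl 0
  have hcand : (Ψh⁻¹ * Λhat) * (Ψh⁻¹ * Λhat)ᵀ = V * Matrix.diagonal e * Vᵀ := by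
    rw [hMhat]; exact cand_B hq V θ V₁ hV₁ Δ hΔ
  have hdetcand : 0 < ((Ψh⁻¹ * Λhat) * (Ψh⁻¹ * Λhat)ᵀ + 1).det := by
    rw [hcand, conj_one V hV2, det_conj V hV2]
    exact Finset.prod_pos (fun i _ => by have := he0 i; linarith)
  have hVGV : Vᵀ * (G * V) = Matrix.diagonal θ := by
    rw [hGeig]
    have h1 : Vᵀ * (V * Matrix.diagonal θ * Vᵀ * V)
        = (Vᵀ * V) * (Matrix.diagonal θ * (Vᵀ * V)) := by
      simp only [Matrix.mul_assoc]
    rw [h1, hV1, one_mul, Matrix.mul_one]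
  have hcval : Real.log ((Ψh⁻¹ * Λhat) * (Ψh⁻¹ * Λhat)ᵀ + 1).det
      + (((Ψh⁻¹ * Λhat) * (Ψh⁻¹ * Λhat)ᵀ + 1)⁻¹ * G).trace = RHS0 := by
    rw [hcand, specE V hV1 hV2 e he0 G]
    have hterm : ∀ i : Fin p,
        Real.log (e i + 1) + (e i + 1)⁻¹ * ((Vᵀ * (G * V)) i i)
          = θ i - (if (i:ℕ) < q then rho (θ i) else 0) := by
      intro i
      rw [hVGV, Matrix.diagonal_apply_eq]
      by_cases hi : (i:ℕ) < q
      · simp only [he, if_pos hi]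
        rw [max_sub_add]
        have hconv : (max (θ i) 1)⁻¹ * θ i = θ i / max (θ i) 1 := by ring
        rw [hconv, cand_term (hθnonneg i)]
      · simp only [he, if_neg hi]
        norm_num
    rw [Finset.sum_congr rfl (fun i _ => hterm i), Finset.sum_sub_distrib, hRHS0]
    congr 1
    rw [← Finset.sum_filter]
  -- general side
  obtain ⟨U, b, hU1, hU2, hb0, hcard, hBeq⟩ := exists_spec (Ψh⁻¹ * Λ)
  have hdetB : 0 < ((Ψh⁻¹ * Λ) * (Ψh⁻¹ * Λ)ᵀ + 1).det := by
    rw [hBeq, conj_one U hU2, det_conj U hU2]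
    exact Finset.prod_pos (fun i _ => by have := hb0 i; linarith)
  set C : Matrix (Fin p) (Fin p) ℝ := Vᵀ * U with hC
  have hC1 : Cᵀ * C = 1 := by
    rw [hC, Matrix.transpose_mul, Matrix.transpose_transpose]
    have h1 : Uᵀ * V * (Vᵀ * U) = Uᵀ * ((V * Vᵀ) * U) := by simp only [Matrix.mul_assoc]
    rw [h1, hV2, one_mul, hU1]
  have hC2 : C * Cᵀ = 1 := by
    rw [hC, Matrix.transpose_mul, Matrix.transpose_transpose]
    have h1 : Vᵀ * U * (Uᵀ * V) = Vᵀ * ((U * Uᵀ) * V) := by simp only [Matrix.mul_assoc]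
    rw [h1, hU2, one_mul, hV1]
  have hUGU : Uᵀ * (G * U) = Cᵀ * (Matrix.diagonal θ * C) := by
    rw [hGeig, hC, Matrix.transpose_mul, Matrix.transpose_transpose]
    simp only [Matrix.mul_assoc]
  set s : Fin p → ℝ := fun i => (Uᵀ * (G * U)) i i with hs
  have hsi : ∀ i, s i = (Uᵀ * (G * U)) i i := fun _ => rfl
  have hsform : ∀ i, s i = ∑ j, θ j * (C j i)^2 := fun i => by
    rw [hsi i, hUGU]; exact entry_diag C θ i
  have hs0 : ∀ i, 0 ≤ s i := fun i => by
    rw [hsform i]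
    exact Finset.sum_nonneg fun j _ => mul_nonneg (hθnonneg j) (sq_nonneg _)
  have hKF : ∀ K : Finset (Fin p),
      ∑ i ∈ K, s i ≤ ∑ j ∈ univ.filter (fun j : Fin p => (j:ℕ) < K.card), θ j := by
    intro K
    rw [Finset.sum_congr rfl (fun i _ => hsform i)]
    exact kyfan θ hθdec hθnonneg C hC1 hC2 K
  have hsum : ∑ i, s i = ∑ j, θ j := by
    rw [Finset.sum_congr rfl (fun i _ => hsform i)]
    exact kyfan_total θ C hC2
  have hmaj := maj hq θ hθnonneg s hs0 hKF (univ.filter (fun i => b i ≠ 0)) hcard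
  have hgen : RHS0 ≤ Real.log ((Ψh⁻¹ * Λ) * (Ψh⁻¹ * Λ)ᵀ + 1).det
      + (((Ψh⁻¹ * Λ) * (Ψh⁻¹ * Λ)ᵀ + 1)⁻¹ * G).trace := by
    rw [hBeq, specE U hU1 hU2 b hb0 G]
    have hterm : ∀ i : Fin p,
        s i - (if b i ≠ 0 then rho (s i) else 0)
          ≤ Real.log (b i + 1) + (b i + 1)⁻¹ * ((Uᵀ * (G * U)) i i) := by
      intro i
      rw [← hsi i]
      by_cases hbi : b i = 0
      · rw [if_neg (by simp [hbi]), hbi]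
        norm_num
      · rw [if_pos hbi]
        have ha : (1:ℝ) ≤ b i + 1 := by have := hb0 i; linarith
        have h := term_lb (hs0 i) ha
        have hconv : (b i + 1)⁻¹ * s i = s i / (b i + 1) := by ring
        rw [hconv]
        linarith
    calc RHS0 = (∑ i, s i) - ∑ j ∈ univ.filter (fun j : Fin p => (j:ℕ) < q), rho (θ j) := by
          rw [hRHS0, hsum]
      _ ≤ (∑ i, s i) - ∑ i ∈ univ.filter (fun i => b i ≠ 0), rho (s i) := by
          linarith [hmaj]
      _ = ∑ i, (s i - (if b i ≠ 0 then rho (s i) else 0)) := by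
          rw [Finset.sum_sub_distrib]
          congr 1
          rw [← Finset.sum_filter]
      _ ≤ ∑ i, (Real.log (b i + 1) + (b i + 1)⁻¹ * ((Uᵀ * (G * U)) i i)) :=
          Finset.sum_le_sum fun i _ => hterm i
  rw [ge_iff_le,
    reduce Ψ Ψh S G hΨh hΨhsq hΨhsym hG Λhat hdetcand,
    reduce Ψ Ψh S G hΨh hΨhsq hΨhsym hG Λ hdetB, hcval]
  linarith [hgen]
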